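/- Let $p, q \geq 1$ be coprime natural numbers and let $d : \mathbb{N} \to \mathbb{R}$ satisfy the linear recurrence $d_{n+p+q} - d_{n+p} - d_{n+q} + d_n = 0$ for all $n \geq 0$. Then $d$ grows at most linearly: there exist real constants $c$ and $C$ such that $|d_n - c\,n| \leq C$ for all $n$. -/

import Mathlib

lemma stmt8_bez (p q : ℕ) (hp : 1 ≤ p) (hq : 1 ≤ q) (hpq : Nat.Coprime p q) :
    ∃ a b : ℕ, a * p = b * q + 1 := by
  rcases eq_or_lt_of_le hq with hq1 | hq2
  · subst hq1; exact ⟨1, p - 1, by omega⟩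
  · have ht := Nat.ModEq.pow_totient hpq
    have hphi : 1 ≤ q.totient := Nat.totient_pos.mpr (by omega)
    refine ⟨p ^ (q.totient - 1), p ^ q.totient / q, ?_⟩
    have hmod : p ^ q.totient % q = 1 := by
      have h1 : (1 : ℕ) % q = 1 := Nat.mod_eq_of_lt hq2
      simpa [Nat.ModEq, h1] using ht
    have hpt : p ^ (q.totient - 1) * p = p ^ q.totient := by
      rw [← pow_succ]; congr 1; omega
    rw [hpt]
    conv_lhs => rw [← Nat.div_add_mod (p ^ q.totient) q]
    rw [hmod, Nat.mul_comm]

/-- Corollary to Theorem 1, `(q,-p)` reduction of `(i)H`: any solution of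
`d (n+p+q) - d (n+p) - d (n+q) + d n = 0` with `p`, `q` coprime grows at most
linearly. -/
theorem stmt_8 (p q : ℕ) (hp : 1 ≤ p) (hq : 1 ≤ q) (hpq : Nat.Coprime p q)
    (d : ℕ → ℝ)
    (h : ∀ n : ℕ, d (n + p + q) - d (n + p) - d (n + q) + d n = 0) :
    ∃ c C : ℝ, ∀ n : ℕ, |d n - c * n| ≤ C := by
  set N := p * q with hN
  have hN0 : 0 < N := Nat.mul_pos hp hq
  -- e n = d (n+q) - d n is p-periodic
  have hek : ∀ k n, d (n + k * p + q) - d (n + k * p) = d (n + q) - d n := by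
    intro k
    induction k with
    | zero => simp
    | succ k ih =>
      intro n
      have h1 := h (n + k * p)
      have h2 := ih n
      have e1 : n + (k + 1) * p + q = n + k * p + p + q := by ring
      have e2 : n + (k + 1) * p = n + k * p + p := by ring
      have e3 : n + k * p + q = n + k * p + q := rfl
      rw [e1, e2]
      linarith
  -- f n = d (n+p) - d n is q-periodic
  have hfk : ∀ k n, d (n + k * q + p) - d (n + k * q) = d (n + p) - d n := by
    intro k
    induction k with
    | zero => simp
    | succ k ih =>
      intro n
      have h1 := h (n + k * q)
      have h2 := ih n
      have e1 : n + (k + 1) * q + p = n + k * q + p + q := by ring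
      have e2 : n + (k + 1) * q = n + k * q + q := by ring
      rw [e1, e2]
      linarith
  -- g n = d (n + N) - d n
  set g : ℕ → ℝ := fun n => d (n + N) - d n with hg
  have hgp : ∀ n, g (n + p) = g n := by
    intro n
    have h1 := hfk p n
    have e1 : n + p + N = n + p * q + p := by rw [hN]; ring
    have e2 : n + N = n + p * q := by rw [hN]
    simp only [hg, e1, e2]
    linarith
  have hgq : ∀ n, g (n + q) = g n := by
    intro n
    have h1 := hek q n
    have e1 : n + q + N = n + q * p + q := by rw [hN]; ring
    have e2 : n + N = n + q * p := by rw [hN]; ring_nf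
    simp only [hg, e1, e2]
    linarith
  have hgpk : ∀ k n, g (n + k * p) = g n := by
    intro k
    induction k with
    | zero => simp
    | succ k ih =>
      intro n
      have e2 : n + (k + 1) * p = n + k * p + p := by ring
      rw [e2, hgp, ih]
  have hgqk : ∀ k n, g (n + k * q) = g n := by
    intro k
    induction k with
    | zero => simp
    | succ k ih =>
      intro n
      have e2 : n + (k + 1) * q = n + k * q + q := by ring
      rw [e2, hgq, ih]
  have hg1 : ∀ n, g (n + 1) = g n := by
    obtain ⟨a, b, hab⟩ := stmt8_bez p q hp hq hpq
    intro n
    have e1 : n + a * p = n + 1 + b * q := by omega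
    calc g (n + 1) = g (n + 1 + b * q) := (hgqk b (n + 1)).symm
    _ = g (n + a * p) := by rw [e1]
    _ = g n := hgpk a n
  have hgc : ∀ n, g n = g 0 := by
    intro n
    induction n with
    | zero => rfl
    | succ n ih => rw [hg1, ih]
  set S := g 0 with hS
  have hdN : ∀ n, d (n + N) = d n + S := by
    intro n
    have := hgc n
    simp only [hg] at this
    linarith
  have hdk : ∀ k r, d (r + k * N) = d r + k * S := by
    intro k
    induction k with
    | zero => simp
    | succ k ih =>
      intro r
      have e2 : r + (k + 1) * N = r + k * N + N := by ring
      rw [e2, hdN, ih]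
      push_cast
      ring
  refine ⟨S / N, Finset.sup' (Finset.range N) ⟨0, Finset.mem_range.mpr hN0⟩
      (fun r => |d r - S / N * r|), ?_⟩
  intro n
  set r := n % N with hr
  set k := n / N with hk
  have hn : n = r + k * N := by rw [hr, hk]; exact (Nat.mod_add_div' n N).symm
  have hdn : d n = d r + k * S := by rw [hn]; exact hdk k r
  have hNr : (N : ℝ) ≠ 0 := by positivity
  have hcn : S / N * n = S / N * r + k * S := by
    rw [hn]
    push_cast
    field_simp
  have key : d n - S / N * n = d r - S / N * r := by
    rw [hdn, hcn]; ring
  rw [key]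
  exact Finset.le_sup' (fun r => |d r - S / N * r|)
    (Finset.mem_range.mpr (Nat.mod_lt n hN0))
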